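/- Let K be a field, r a positive integer, and V a finite-dimensional K-vector space which is the internal direct sum of subspaces (V_m)_{m ∈ ℤ/rℤ}, all of the same dimension. Let F : V → V be a K-linear endomorphism with F(V_m) ⊆ V_{m+1} for all m ∈ ℤ/rℤ. Then there exists a monic polynomial q ∈ K[X] such that the characteristic polynomial of F equals q composed with X^r; in other words, the characteristic polynomial of F is a polynomial in T^r. -/

import Mathlib

open Polynomial

private lemma coeff_aeval_CmulX {R : Type*} [CommRing R] (c : R) (p : R[X]) (k : ℕ) :
    (aeval ((C c) * X : R[X]) p).coeff k = p.coeff k * c ^ k := by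
  induction p using Polynomial.induction_on' with
  | add p q hp hq => simp [hp, hq, add_mul]
  | monomial j a =>
    rw [aeval_monomial, mul_pow, ← C_pow, Polynomial.algebraMap_eq, ← mul_assoc, ← C_mul,
      coeff_C_mul, coeff_monomial, coeff_X_pow]
    by_cases h : j = k <;> simp [h, Ne.symm, h]

private lemma aux_coeff_zero {K : Type*} [Field K] {r : ℕ} (hr : 0 < r)
    {ι : Type*} [Fintype ι] [DecidableEq ι]
    (M : Matrix ι ι K) (bf : ι → ZMod r)
    (hM : ∀ i j, M i j ≠ 0 → bf i = bf j + 1)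
    (k : ℕ) (hk : k % r ≠ (Fintype.card ι) % r) :
    M.charpoly.coeff k = 0 := by
  have : NeZero r := ⟨hr.ne'⟩
  set n := Fintype.card ι with hn
  rcases lt_or_ge n k with hkn | hkn
  · exact coeff_eq_zero_of_natDegree_lt (by rwa [Matrix.charpoly_natDegree_eq_dim])
  set f : K[X] := X ^ r - 1 with hfdef
  have hf : f.Monic := by simpa using monic_X_pow_sub_C (1 : K) hr.ne'
  set R := AdjoinRoot f with hR
  set t : R := AdjoinRoot.root f with ht
  have htr : t ^ r = 1 := by
    have h0 : AdjoinRoot.mk f f = 0 := AdjoinRoot.mk_self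
    have : (AdjoinRoot.mk f) (X ^ r) - 1 = 0 := by
      simpa [hfdef, map_sub, map_pow] using h0
    simpa [map_pow, ht] using sub_eq_zero.mp this
  have tpow : ∀ m : ℕ, t ^ m = t ^ (m % r) := by
    intro m
    conv_lhs => rw [← Nat.div_add_mod m r]
    rw [pow_add, pow_mul, htr, one_pow, one_mul]
  have tcong : ∀ x y : ℕ, x ≡ y [MOD r] → t ^ x = t ^ y := by
    intro x y h
    rw [tpow x, tpow y, h]
  -- diagonal conjugation
  set M' : Matrix ι ι R := M.map (algebraMap K R) with hM'
  set e : ι → R := fun i => t ^ (bf i).val with he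
  set einv : ι → R := fun i => t ^ (r - (bf i).val) with heinv
  have heinv1 : ∀ i, e i * einv i = 1 := by
    intro i
    rw [he, heinv, ← pow_add]
    have : (bf i).val + (r - (bf i).val) = r := by
      have := ZMod.val_lt (bf i); omega
    rw [this, htr]
  have hkey : ∀ i j, e i * algebraMap K R (M i j) * einv j
      = t * algebraMap K R (M i j) := by
    intro i j
    by_cases h0 : M i j = 0
    · simp [h0]
    have hb := hM i j h0
    have hval : (bf i).val ≡ (bf j).val + 1 [MOD r] := by
      rw [hb, ZMod.val_add]
      have h1 : (1 : ZMod r).val = 1 % r := ZMod.val_one_eq_one_mod r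
      rw [h1]
      calc ((bf j).val + 1 % r) % r ≡ (bf j).val + 1 % r [MOD r] := Nat.mod_modEq _ r
        _ ≡ (bf j).val + 1 [MOD r] := Nat.ModEq.add_left _ (Nat.mod_modEq 1 r)
    have hexp : t ^ ((bf i).val + (r - (bf j).val)) = t ^ 1 := by
      apply tcong
      have hlt := ZMod.val_lt (bf j)
      calc (bf i).val + (r - (bf j).val)
          ≡ ((bf j).val + 1) + (r - (bf j).val) [MOD r] := hval.add_right _
        _ = r + 1 := by omega
        _ ≡ 1 [MOD r] := by
            show (r + 1) % r = 1 % r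
            exact Nat.add_mod_left r 1
    rw [mul_comm (e i) _, mul_assoc, he, heinv, ← pow_add, hexp, pow_one, mul_comm]
  -- conjugation identity: charpoly (t • M') = charpoly M'
  set D : Matrix ι ι R[X] := Matrix.diagonal (fun i => C (e i)) with hD
  set Dinv : Matrix ι ι R[X] := Matrix.diagonal (fun i => C (einv i)) with hDinv
  have hsm : ∀ i j, (t • M') i j = t * algebraMap K R (M i j) := by
    intro i j; simp [hM', Matrix.smul_apply, Matrix.map_apply]
  have hMa : ∀ i j, M' i j = algebraMap K R (M i j) := by
    intro i j; simp [hM', Matrix.map_apply]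
  have hconj : D * Matrix.charmatrix M' * Dinv = Matrix.charmatrix (t • M') := by
    refine Matrix.ext fun i j => ?_
    rw [Matrix.mul_diagonal, Matrix.diagonal_mul]
    by_cases hij : i = j
    · subst hij
      rw [Matrix.charmatrix_apply_eq, Matrix.charmatrix_apply_eq]
      calc C (e i) * (X - C (M' i i)) * C (einv i)
          = C (e i * einv i) * X - C (e i * M' i i * einv i) := by
            rw [map_mul, map_mul, map_mul]; ring
        _ = X - C ((t • M') i i) := by
            rw [heinv1, map_one, one_mul, hMa, hkey, ← hsm]
    · rw [Matrix.charmatrix_apply_ne _ _ _ hij, Matrix.charmatrix_apply_ne _ _ _ hij]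
      calc C (e i) * -C (M' i j) * C (einv j)
          = -C (e i * M' i j * einv j) := by rw [map_mul, map_mul]; ring
        _ = -C ((t • M') i j) := by rw [hMa, hkey, ← hsm]
  have hdet1 : Matrix.charpoly (t • M') = Matrix.charpoly M' := by
    rw [Matrix.charpoly, Matrix.charpoly, ← hconj, Matrix.det_mul, Matrix.det_mul]
    rw [hD, hDinv, Matrix.det_diagonal, Matrix.det_diagonal]
    rw [mul_comm _ (Matrix.charmatrix M').det, mul_assoc, ← Finset.prod_mul_distrib]
    simp [← C_mul, heinv1]
  -- scaling identity
  set tinv : R := t ^ (r - 1) with htinv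
  have htt : t * tinv = 1 := by
    rw [htinv, ← pow_succ']
    have : r - 1 + 1 = r := by omega
    rw [this, htr]
  set σ : R[X] →ₐ[R] R[X] := aeval (C tinv * X) with hσ
  have hmap : Matrix.charmatrix (t • M') = (C t) • (Matrix.charmatrix M').map σ := by
    refine Matrix.ext fun i j => ?_
    rw [Matrix.smul_apply, Matrix.map_apply, smul_eq_mul]
    by_cases hij : i = j
    · subst hij
      rw [Matrix.charmatrix_apply_eq, Matrix.charmatrix_apply_eq]
      have hCa : σ (X - C (M' i i)) = C tinv * X - C (M' i i) := by
        rw [hσ, map_sub, aeval_X, aeval_C]; rfl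
      rw [hCa, hsm, hMa]
      calc X - C (t * algebraMap K R (M i i))
          = C (t * tinv) * X - C t * C (algebraMap K R (M i i)) := by
            rw [htt, map_one, one_mul, C_mul]
        _ = C t * (C tinv * X - C (algebraMap K R (M i i))) := by
            rw [map_mul]; ring
    · rw [Matrix.charmatrix_apply_ne _ _ _ hij, Matrix.charmatrix_apply_ne _ _ _ hij]
      have hCa : σ (-C (M' i j)) = -C (M' i j) := by
        rw [hσ, map_neg, aeval_C]; rfl
      rw [hCa, hsm, hMa, map_mul]; ring
  have hdet2 : Matrix.charpoly (t • M') = (C t) ^ n * σ (Matrix.charpoly M') := by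
    rw [Matrix.charpoly, hmap, Matrix.det_smul, Matrix.charpoly, AlgHom.map_det,
      AlgHom.mapMatrix_apply]
  -- combine
  have hchi : (Matrix.charpoly M') = (C t) ^ n * σ (Matrix.charpoly M') := by
    rw [← hdet2, hdet1]
  have hMc : Matrix.charpoly M' = (Matrix.charpoly M).map (algebraMap K R) := by
    rw [hM', Matrix.charpoly_map]
  set a : R := algebraMap K R (M.charpoly.coeff k) with ha
  have hcoeff : a = t ^ n * (a * tinv ^ k) := by
    have h := congrArg (fun p : R[X] => p.coeff k) hchi
    simp only [← C_pow, coeff_C_mul] at h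
    rw [hσ, coeff_aeval_CmulX, hMc, coeff_map] at h
    exact h
  have h2 : t ^ k * a = t ^ n * a := by
    conv_lhs => rw [hcoeff]
    calc t ^ k * (t ^ n * (a * tinv ^ k)) = t ^ n * a * (t * tinv) ^ k := by
          rw [mul_pow]; ring
      _ = t ^ n * a := by rw [htt, one_pow, mul_one]
  have h3 : t ^ (k % r) * a = t ^ (n % r) * a := by
    rw [← tpow, ← tpow]; exact h2
  set c : K := M.charpoly.coeff k with hc
  have hamk : a = AdjoinRoot.mk f (C c) := by
    rw [ha, AdjoinRoot.algebraMap_eq]; rfl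
  have hmk0 : AdjoinRoot.mk f (C c * X ^ (k % r) - C c * X ^ (n % r)) = 0 := by
    rw [map_sub, map_mul, map_mul, map_pow, map_pow, AdjoinRoot.mk_X, ← hamk, ← ht]
    linear_combination h3
  have hdvd : f ∣ (C c * X ^ (k % r) - C c * X ^ (n % r)) := AdjoinRoot.mk_eq_zero.mp hmk0
  have hdegf : f.degree = (r : ℕ) := by
    rw [hfdef]
    have : (1 : K[X]) = C 1 := by rw [map_one]
    rw [this, degree_X_pow_sub_C hr]
  have hdeg : (C c * X ^ (k % r) - C c * X ^ (n % r)).degree < f.degree := by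
    rw [hdegf]
    refine lt_of_le_of_lt (degree_sub_le _ _) ?_
    rw [max_lt_iff]
    constructor
    · exact lt_of_le_of_lt (degree_C_mul_X_pow_le _ _)
        (by exact_mod_cast Nat.mod_lt k hr)
    · exact lt_of_le_of_lt (degree_C_mul_X_pow_le _ _)
        (by exact_mod_cast Nat.mod_lt n hr)
  have hzero := Polynomial.eq_zero_of_dvd_of_degree_lt hdvd hdeg
  rw [← mul_sub] at hzero
  rcases mul_eq_zero.mp hzero with hC | hX
  · exact C_eq_zero.mp hC
  · exfalso
    apply hk
    have := sub_eq_zero.mp hX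
    have := congrArg natDegree this
    simpa [natDegree_X_pow] using this

/-- If `V` is the internal direct sum of subspaces `(V_m)_{m ∈ ℤ/rℤ}`, all of the same
dimension, and `F` is an endomorphism with `F(V_m) ⊆ V_{m+1}` for all `m`, then the
characteristic polynomial of `F` is a (monic) polynomial in `T^r`. -/
theorem stmt8 (K : Type*) [Field K] (V : Type*) [AddCommGroup V] [Module K V]
    [FiniteDimensional K V]
    (r : ℕ) (hr : 0 < r) (Vm : ZMod r → Submodule K V)
    (hint : DirectSum.IsInternal Vm)
    (hdim : ∀ m m' : ZMod r, Module.finrank K (Vm m) = Module.finrank K (Vm m'))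
    (F : Module.End K V) (hF : ∀ m : ZMod r, Submodule.map F (Vm m) ≤ Vm (m + 1)) :
    ∃ q : Polynomial K, q.Monic ∧
      LinearMap.charpoly (F : V →ₗ[K] V) = q.comp (Polynomial.X ^ r) := by

  have : NeZero r := ⟨hr.ne'⟩
  set d : ZMod r → ℕ := fun m => Module.finrank K (Vm m) with hd
  set bm : ∀ m, Module.Basis (Fin (d m)) K (Vm m) := fun m => Module.finBasis K (Vm m) with hbm
  set B := hint.collectedBasis bm with hB
  set M := LinearMap.toMatrix B B F with hMdef
  have hchar : LinearMap.charpoly (F : V →ₗ[K] V) = M.charpoly :=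
    (LinearMap.charpoly_toMatrix F B).symm
  set n := Fintype.card ((m : ZMod r) × Fin (d m)) with hn
  have hnval : n = r * d 0 := by
    rw [hn, Fintype.card_sigma]
    simp only [Fintype.card_fin]
    rw [Finset.sum_congr rfl (fun m _ => (hdim m 0 : d m = d 0))]
    simp [Finset.card_univ, ZMod.card, mul_comm, hd]
  have hnr : n % r = 0 := by rw [hnval]; exact Nat.mul_mod_right r _
  -- block structure
  have hblk : ∀ i j : (m : ZMod r) × Fin (d m), M i j ≠ 0 → i.1 = j.1 + 1 := by
    intro i j hne
    by_contra hne2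
    apply hne
    rw [hMdef, LinearMap.toMatrix_apply]
    have hmem : F (B j) ∈ Vm (j.1 + 1) :=
      hF j.1 (Submodule.mem_map_of_mem (hint.collectedBasis_mem bm j))
    obtain ⟨m, a⟩ := i
    exact hint.collectedBasis_repr_of_mem_ne bm (fun h => hne2 h.symm) hmem
  have hcz : ∀ k : ℕ, k % r ≠ 0 → M.charpoly.coeff k = 0 := by
    intro k hk
    exact aux_coeff_zero hr M (fun i => i.1) hblk k (by rw [← hn, hnr]; exact hk)
  have hmonic : M.charpoly.Monic := Matrix.charpoly_monic M
  have hdeg : M.charpoly.natDegree = n := by rw [Matrix.charpoly_natDegree_eq_dim, hn]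
  -- build q
  set P := M.charpoly with hP
  set q : K[X] := ∑ i ∈ Finset.range (n / r + 1), C (P.coeff (r * i)) * X ^ i with hq
  have hqcoeff : ∀ i : ℕ, q.coeff i = if i ≤ n / r then P.coeff (r * i) else 0 := by
    intro i0
    rw [hq, finset_sum_coeff]
    simp only [C_mul_X_pow_eq_monomial, coeff_monomial]
    by_cases h : i0 ≤ n / r
    · rw [Finset.sum_eq_single i0]
      · simp [h]
      · intro b _ hb; simp [hb]
      · intro hmem; exact absurd (Finset.mem_range.mpr (by omega)) hmem
    · rw [if_neg h, Finset.sum_eq_zero]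
      intro b hb
      rw [if_neg]
      intro hbi; rw [hbi] at hb; exact h (by exact Nat.lt_succ_iff.mp (Finset.mem_range.mp hb))
  have hqmonic : q.Monic := by
    apply monic_of_natDegree_le_of_coeff_eq_one (n / r)
    · rw [hq]
      apply Polynomial.natDegree_sum_le_of_forall_le
      intro i hi
      refine (natDegree_C_mul_le _ _).trans ?_
      simpa using Nat.lt_succ_iff.mp (Finset.mem_range.mp hi)
    · rw [hqcoeff, if_pos le_rfl, Nat.mul_div_cancel' (Nat.dvd_of_mod_eq_zero hnr)]
      · rw [← hdeg]; exact hmonic.coeff_natDegree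
  refine ⟨q, hqmonic, ?_⟩
  rw [hchar]
  ext j
  rw [Polynomial.comp, Polynomial.eval₂_finset_sum]
  have hterm : ∀ i ∈ Finset.range (n / r + 1),
      eval₂ C (X ^ r) (C (P.coeff (r * i)) * X ^ i) = C (P.coeff (r * i)) * X ^ (r * i) := by
    intro i _
    rw [eval₂_mul, eval₂_C, eval₂_X_pow, ← pow_mul]
  rw [Finset.sum_congr rfl hterm, finset_sum_coeff]
  simp only [C_mul_X_pow_eq_monomial, coeff_monomial]
  by_cases hj : r ∣ j
  · obtain ⟨i0, rfl⟩ := hj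
    by_cases hi0 : i0 ≤ n / r
    · rw [Finset.sum_eq_single i0]
      · simp
      · intro b _ hb
        rw [if_neg]
        intro hbi
        exact hb (Nat.eq_of_mul_eq_mul_left hr hbi)
      · intro hmem; exact absurd (Finset.mem_range.mpr (by omega)) hmem
    · have hjn : n < r * i0 := by
        conv_lhs => rw [← Nat.mul_div_cancel' (Nat.dvd_of_mod_eq_zero hnr)]
        exact (Nat.mul_lt_mul_left hr).mpr (by omega)
      rw [Finset.sum_eq_zero, coeff_eq_zero_of_natDegree_lt (by rw [hdeg]; exact hjn)]
      intro b hb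
      rw [if_neg]
      intro hbi
      have hb' := Finset.mem_range.mp hb
      have : b = i0 := Nat.eq_of_mul_eq_mul_left hr hbi
      omega
  · rw [hcz j (fun h => hj (Nat.dvd_of_mod_eq_zero h)), Finset.sum_eq_zero]
    intro b _
    rw [if_neg]
    intro hbi
    exact hj ⟨b, hbi.symm⟩
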